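/- arXiv:2404.07810 — 4 statements merged into one kernel-verified Lean document; each statement's English description precedes it below -/
import Mathlib

section
/- The optimality gap satisfies OG ≤ Σ_{k=1}^K Σ_{i ∈ C_k} γ_i ( |F(z*_ζ, ξ_i) − F(z*_ζ, ζ_k)| + |F(z*_ξ, ξ_i) − F(z*_ξ, ζ_k)| ), where z*_ξ minimizes F(·, ξ) over Z, z*_ζ minimizes F(·, ζ) over Z, and OG := F(z*_ζ, ξ) − F(z*_ξ, ξ). -/
/-- The optimality gap satisfies
`OG ≤ Σ_k Σ_{i ∈ C_k} γ_i (|F(z*_ζ, ξ_i) − F(z*_ζ, ζ_k)| + |F(z*_ξ, ξ_i) − F(z*_ξ, ζ_k)|)`. -/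
theorem sr_optimality_gap_abs_bound {D S : Type*} [AddCommGroup D] [Module ℝ D]
    (Z : Set D) (hZ : Z.Nonempty) (F : D → S → ℝ)
    {N K : ℕ} (ξ : Fin N → S) (γ : Fin N → ℝ)
    (hγ : ∀ i, 0 < γ i) (hγsum : ∑ i, γ i = 1)
    (C : Fin K → Finset (Fin N))
    (hCne : ∀ k, (C k).Nonempty)
    (hCdisj : ∀ k l, k ≠ l → Disjoint (C k) (C l))
    (hCcover : Finset.univ.biUnion C = Finset.univ)
    (ζ : Fin K → S)
    (zξ : D) (hzξ : zξ ∈ Z)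
    (hoptξ : ∀ z ∈ Z, ∑ i, γ i * F zξ (ξ i) ≤ ∑ i, γ i * F z (ξ i))
    (zζ : D) (hzζ : zζ ∈ Z)
    (hoptζ : ∀ z ∈ Z,
      ∑ k, (∑ i ∈ C k, γ i) * F zζ (ζ k) ≤ ∑ k, (∑ i ∈ C k, γ i) * F z (ζ k)) :
    (∑ i, γ i * F zζ (ξ i)) - (∑ i, γ i * F zξ (ξ i))
      ≤ ∑ k, ∑ i ∈ C k, γ i *
          (|F zζ (ξ i) - F zζ (ζ k)| + |F zξ (ξ i) - F zξ (ζ k)|) := by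
  -- partition lemma: sums over univ split into clusters
  have hpart : ∀ g : Fin N → ℝ, ∑ i, g i = ∑ k, ∑ i ∈ C k, g i := by
    intro g
    rw [← hCcover, Finset.sum_biUnion]
    intro k _ l _ hkl
    exact hCdisj k l hkl
  have hopt := hoptζ zξ hzξ
  have hξ1 : (∑ i, γ i * F zζ (ξ i)) = ∑ k, ∑ i ∈ C k, γ i * F zζ (ξ i) :=
    hpart _
  have hξ2 : (∑ i, γ i * F zξ (ξ i)) = ∑ k, ∑ i ∈ C k, γ i * F zξ (ξ i) :=
    hpart _
  have hζ1 : ∀ z : D, ∑ k, (∑ i ∈ C k, γ i) * F z (ζ k)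
      = ∑ k, ∑ i ∈ C k, γ i * F z (ζ k) := by
    intro z
    exact Finset.sum_congr rfl fun k _ => Finset.sum_mul ..
  rw [hξ1, hξ2]
  rw [hζ1 zξ, hζ1 zζ] at hopt
  have key : (∑ k, ∑ i ∈ C k, γ i * F zζ (ξ i)) - ∑ k, ∑ i ∈ C k, γ i * F zξ (ξ i)
      ≤ (∑ k, ∑ i ∈ C k, γ i * (F zζ (ξ i) - F zζ (ζ k)))
        + ∑ k, ∑ i ∈ C k, γ i * (F zξ (ζ k) - F zξ (ξ i)) := by
    have := hopt
    simp only [mul_sub, Finset.sum_sub_distrib]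
    linarith
  refine key.trans ?_
  rw [← Finset.sum_add_distrib]
  refine Finset.sum_le_sum fun k _ => ?_
  rw [← Finset.sum_add_distrib]
  refine Finset.sum_le_sum fun i _ => ?_
  rw [← mul_add]
  refine mul_le_mul_of_nonneg_left ?_ (hγ i).le
  have h1 := le_abs_self (F zζ (ξ i) - F zζ (ζ k))
  have h2 : F zξ (ζ k) - F zξ (ξ i) ≤ |F zξ (ξ i) - F zξ (ζ k)| := by
    rw [abs_sub_comm]; exact le_abs_self _
  linarith
end

section
/- Suppose there exist functions h : ℝ → ℝ and d : S × S → ℝ such that for every z ∈ Z and every pair of scenarios ξ_i, ζ_k appearing in the problem, |F(z, ξ_i) − F(z, ζ_k)| ≤ h(‖z‖) · d(ξ_i, ζ_k). Then the optimality gap satisfies OG ≤ (h(‖z*_ξ‖) + h(‖z*_ζ‖)) · Σ_{k=1}^K Σ_{i ∈ C_k} γ_i d(ξ_i, ζ_k). -/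
/-- If `|F(z, ξ_i) − F(z, ζ_k)| ≤ h(‖z‖) · d(ξ_i, ζ_k)` for all
feasible `z` and all scenario pairs, then
`OG ≤ (h(‖z*_ξ‖) + h(‖z*_ζ‖)) · Σ_k Σ_{i ∈ C_k} γ_i d(ξ_i, ζ_k)`. -/
theorem sr_optimality_gap_lipschitz_bound {D S : Type*}
    [NormedAddCommGroup D] [NormedSpace ℝ D]
    (Z : Set D) (hZ : Z.Nonempty) (F : D → S → ℝ)
    {N K : ℕ} (ξ : Fin N → S) (γ : Fin N → ℝ)
    (hγ : ∀ i, 0 < γ i) (hγsum : ∑ i, γ i = 1)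
    (C : Fin K → Finset (Fin N))
    (hCne : ∀ k, (C k).Nonempty)
    (hCdisj : ∀ k l, k ≠ l → Disjoint (C k) (C l))
    (hCcover : Finset.univ.biUnion C = Finset.univ)
    (ζ : Fin K → S)
    (zξ : D) (hzξ : zξ ∈ Z)
    (hoptξ : ∀ z ∈ Z, ∑ i, γ i * F zξ (ξ i) ≤ ∑ i, γ i * F z (ξ i))
    (zζ : D) (hzζ : zζ ∈ Z)
    (hoptζ : ∀ z ∈ Z,
      ∑ k, (∑ i ∈ C k, γ i) * F zζ (ζ k) ≤ ∑ k, (∑ i ∈ C k, γ i) * F z (ζ k))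
    (h : ℝ → ℝ) (d : S → S → ℝ)
    (hd : ∀ s s' : S, 0 ≤ d s s')
    (hbound : ∀ z ∈ Z, ∀ (i : Fin N) (k : Fin K),
      |F z (ξ i) - F z (ζ k)| ≤ h ‖z‖ * d (ξ i) (ζ k)) :
    (∑ i, γ i * F zζ (ξ i)) - (∑ i, γ i * F zξ (ξ i))
      ≤ (h ‖zξ‖ + h ‖zζ‖) * ∑ k, ∑ i ∈ C k, γ i * d (ξ i) (ζ k) := by

  have hsplit : ∀ (f : Fin N → ℝ), ∑ i, f i = ∑ k, ∑ i ∈ C k, f i := by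
    intro f
    rw [← hCcover, Finset.sum_biUnion]
    intro k _ l _ hkl
    exact hCdisj k l hkl
  set T := ∑ k, ∑ i ∈ C k, γ i * d (ξ i) (ζ k) with hT
  have key : ∀ z ∈ Z,
      |∑ i, γ i * F z (ξ i) - ∑ k, (∑ i ∈ C k, γ i) * F z (ζ k)| ≤ h ‖z‖ * T := by
    intro z hz
    have e1 : ∑ i, γ i * F z (ξ i) - ∑ k, (∑ i ∈ C k, γ i) * F z (ζ k)
        = ∑ k, ∑ i ∈ C k, γ i * (F z (ξ i) - F z (ζ k)) := by
      rw [hsplit (fun i => γ i * F z (ξ i)), ← Finset.sum_sub_distrib]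
      congr 1
      ext k
      rw [Finset.sum_mul, ← Finset.sum_sub_distrib]
      congr 1
      ext i
      ring
    rw [e1, hT, Finset.mul_sum]
    refine (Finset.abs_sum_le_sum_abs _ _).trans (Finset.sum_le_sum fun k _ => ?_)
    rw [Finset.mul_sum]
    refine (Finset.abs_sum_le_sum_abs _ _).trans (Finset.sum_le_sum fun i _ => ?_)
    rw [abs_mul, abs_of_pos (hγ i)]
    calc γ i * |F z (ξ i) - F z (ζ k)|
        ≤ γ i * (h ‖z‖ * d (ξ i) (ζ k)) :=
          mul_le_mul_of_nonneg_left (hbound z hz i k) (hγ i).le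
      _ = h ‖z‖ * (γ i * d (ξ i) (ζ k)) := by ring
  have h1 := abs_le.mp (key zζ hzζ)
  have h2 := abs_le.mp (key zξ hzξ)
  have h3 := hoptζ zξ hzξ
  nlinarith [h1.1, h1.2, h2.1, h2.2, h3]
end

section
/- Suppose h : ℝ → ℝ is nondecreasing, every feasible decision satisfies ‖z‖ ≤ M, and for every z ∈ Z and every pair of scenarios ξ_i, ζ_k appearing in the problem, |F(z, ξ_i) − F(z, ζ_k)| ≤ h(‖z‖) · d(ξ_i, ζ_k) with d nonnegative. Then the optimality gap satisfies OG ≤ 2 h(M) · Σ_{k=1}^K Σ_{i ∈ C_k} γ_i d(ξ_i, ζ_k); in particular, minimizing the weighted sum of within-cluster distances Σ_{k} Σ_{i ∈ C_k} γ_i d(ξ_i, ζ_k) minimizes this upper bound on OG. -/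
/-- With `h` nondecreasing, `‖z‖ ≤ M` on `Z`, and
`|F(z, ξ_i) − F(z, ζ_k)| ≤ h(‖z‖) · d(ξ_i, ζ_k)` with `d` nonnegative,
the optimality gap satisfies `OG ≤ 2 h(M) · Σ_k Σ_{i ∈ C_k} γ_i d(ξ_i, ζ_k)`. -/
theorem sr_optimality_gap_spdd_bound {D S : Type*}
    [NormedAddCommGroup D] [NormedSpace ℝ D]
    (Z : Set D) (hZ : Z.Nonempty) (F : D → S → ℝ)
    {N K : ℕ} (ξ : Fin N → S) (γ : Fin N → ℝ)
    (hγ : ∀ i, 0 < γ i) (hγsum : ∑ i, γ i = 1)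
    (C : Fin K → Finset (Fin N))
    (hCne : ∀ k, (C k).Nonempty)
    (hCdisj : ∀ k l, k ≠ l → Disjoint (C k) (C l))
    (hCcover : Finset.univ.biUnion C = Finset.univ)
    (ζ : Fin K → S)
    (zξ : D) (hzξ : zξ ∈ Z)
    (hoptξ : ∀ z ∈ Z, ∑ i, γ i * F zξ (ξ i) ≤ ∑ i, γ i * F z (ξ i))
    (zζ : D) (hzζ : zζ ∈ Z)
    (hoptζ : ∀ z ∈ Z,
      ∑ k, (∑ i ∈ C k, γ i) * F zζ (ζ k) ≤ ∑ k, (∑ i ∈ C k, γ i) * F z (ζ k))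
    (h : ℝ → ℝ) (hmono : Monotone h)
    (M : ℝ) (hM : ∀ z ∈ Z, ‖z‖ ≤ M)
    (d : S → S → ℝ) (hd : ∀ s s' : S, 0 ≤ d s s')
    (hbound : ∀ z ∈ Z, ∀ (i : Fin N) (k : Fin K),
      |F z (ξ i) - F z (ζ k)| ≤ h ‖z‖ * d (ξ i) (ζ k)) :
    (∑ i, γ i * F zζ (ξ i)) - (∑ i, γ i * F zξ (ξ i))
      ≤ 2 * h M * ∑ k, ∑ i ∈ C k, γ i * d (ξ i) (ζ k) := by
  set E := ∑ k, ∑ i ∈ C k, γ i * d (ξ i) (ζ k) with hE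
  -- partition rewriting lemma
  have hsplit : ∀ g : Fin N → ℝ, ∑ i, g i = ∑ k, ∑ i ∈ C k, g i := by
    intro g
    rw [← hCcover, Finset.sum_biUnion]
    intro k _ l _ hkl
    exact hCdisj k l hkl
  -- key estimate: for z ∈ Z, |A(z) - B(z)| ≤ h M * E
  have key : ∀ z ∈ Z,
      |(∑ i, γ i * F z (ξ i)) - ∑ k, (∑ i ∈ C k, γ i) * F z (ζ k)| ≤ h M * E := by
    intro z hz
    have hzM : h ‖z‖ ≤ h M := hmono (hM z hz)
    rw [hsplit (fun i => γ i * F z (ξ i))]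
    rw [← Finset.sum_sub_distrib]
    calc |∑ k, ((∑ i ∈ C k, γ i * F z (ξ i)) - (∑ i ∈ C k, γ i) * F z (ζ k))|
        ≤ ∑ k, |(∑ i ∈ C k, γ i * F z (ξ i)) - (∑ i ∈ C k, γ i) * F z (ζ k)| :=
          Finset.abs_sum_le_sum_abs _ _
      _ ≤ ∑ k, ∑ i ∈ C k, γ i * (h M * d (ξ i) (ζ k)) := by
          apply Finset.sum_le_sum
          intro k _
          rw [Finset.sum_mul, ← Finset.sum_sub_distrib]
          calc |∑ i ∈ C k, (γ i * F z (ξ i) - γ i * F z (ζ k))|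
              ≤ ∑ i ∈ C k, |γ i * F z (ξ i) - γ i * F z (ζ k)| :=
                Finset.abs_sum_le_sum_abs _ _
            _ ≤ ∑ i ∈ C k, γ i * (h M * d (ξ i) (ζ k)) := by
                apply Finset.sum_le_sum
                intro i _
                rw [← mul_sub, abs_mul, abs_of_pos (hγ i)]
                apply mul_le_mul_of_nonneg_left _ (hγ i).le
                calc |F z (ξ i) - F z (ζ k)| ≤ h ‖z‖ * d (ξ i) (ζ k) := hbound z hz i k
                  _ ≤ h M * d (ξ i) (ζ k) := mul_le_mul_of_nonneg_right hzM (hd _ _)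
      _ = h M * E := by
          rw [hE, Finset.mul_sum]
          congr 1; ext k
          rw [Finset.mul_sum]
          congr 1; ext i; ring
  have k1 := key zζ hzζ
  have k2 := key zξ hzξ
  have hB := hoptζ zξ hzξ
  have h1 := abs_le.mp k1
  have h2 := abs_le.mp k2
  linarith [h1.1, h1.2, h2.1, h2.2]
end

section
/- Combined two-sided bound underlying inequality (7): for z*_ξ a minimizer of F(·, ξ) over Z and z*_ζ a minimizer of F(·, ζ) over Z, OG ≤ Σ_{k=1}^K Σ_{i ∈ C_k} γ_i (F(z*_ζ, ξ_i) − F(z*_ζ, ζ_k)) − Σ_{k=1}^K Σ_{i ∈ C_k} γ_i (F(z*_ξ, ξ_i) − F(z*_ξ, ζ_k)), where OG := F(z*_ζ, ξ) − F(z*_ξ, ξ). -/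
/-- Combined two-sided bound underlying inequality (7):
`OG ≤ Σ_k Σ_{i ∈ C_k} γ_i (F(z*_ζ, ξ_i) − F(z*_ζ, ζ_k))
     − Σ_k Σ_{i ∈ C_k} γ_i (F(z*_ξ, ξ_i) − F(z*_ξ, ζ_k))`. -/
theorem sr_optimality_gap_two_sided_bound {D S : Type*}
    [AddCommGroup D] [Module ℝ D]
    (Z : Set D) (hZ : Z.Nonempty) (F : D → S → ℝ)
    {N K : ℕ} (ξ : Fin N → S) (γ : Fin N → ℝ)
    (hγ : ∀ i, 0 < γ i) (hγsum : ∑ i, γ i = 1)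
    (C : Fin K → Finset (Fin N))
    (hCne : ∀ k, (C k).Nonempty)
    (hCdisj : ∀ k l, k ≠ l → Disjoint (C k) (C l))
    (hCcover : Finset.univ.biUnion C = Finset.univ)
    (ζ : Fin K → S)
    (zξ : D) (hzξ : zξ ∈ Z)
    (hoptξ : ∀ z ∈ Z, ∑ i, γ i * F zξ (ξ i) ≤ ∑ i, γ i * F z (ξ i))
    (zζ : D) (hzζ : zζ ∈ Z)
    (hoptζ : ∀ z ∈ Z,
      ∑ k, (∑ i ∈ C k, γ i) * F zζ (ζ k) ≤ ∑ k, (∑ i ∈ C k, γ i) * F z (ζ k)) :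
    (∑ i, γ i * F zζ (ξ i)) - (∑ i, γ i * F zξ (ξ i))
      ≤ (∑ k, ∑ i ∈ C k, γ i * (F zζ (ξ i) - F zζ (ζ k)))
        - (∑ k, ∑ i ∈ C k, γ i * (F zξ (ξ i) - F zξ (ζ k))) := by
  have hpart : ∀ z : D, ∑ i, γ i * F z (ξ i) = ∑ k, ∑ i ∈ C k, γ i * F z (ξ i) := by
    intro z
    rw [← hCcover, Finset.sum_biUnion]
    intro k _ l _ hkl
    exact hCdisj k l hkl
  have hsplit : ∀ z : D, ∑ k, ∑ i ∈ C k, γ i * (F z (ξ i) - F z (ζ k))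
      = (∑ i, γ i * F z (ξ i)) - ∑ k, (∑ i ∈ C k, γ i) * F z (ζ k) := by
    intro z
    rw [hpart z]
    rw [← Finset.sum_sub_distrib]
    congr 1; ext k
    rw [Finset.sum_mul, ← Finset.sum_sub_distrib]
    congr 1; ext i; ring
  rw [hsplit, hsplit]
  have := hoptζ zξ hzξ
  linarith
end
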